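/- For any real f, the sigmoid admits the Pólya-Gamma integral representation: σ(f) = (1/2)·e^{f/2}·∫₀^∞ e^{−ξ f²/2} p_PG(ξ|1,0) dξ, where p_PG(·|1,0) is the density of the Pólya-Gamma PG(1,0) distribution, whose Laplace transform satisfies ∫₀^∞ e^{−ξ t} p_PG(ξ|1,0) dξ = cosh(√(t/2))^{−1} for t ≥ 0. -/

import Mathlib

open MeasureTheory

/-- The logistic sigmoid σ(x) = 1/(1+exp(−x)). -/
noncomputable def logistic (x : ℝ) : ℝ := 1 / (1 + Real.exp (-x))

/-- Pólya-Gamma integral representation of the sigmoid: if `pPG` is the density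
of the PG(1,0) distribution on (0,∞), whose Laplace transform is
∫₀^∞ e^{−ξt} p_PG(ξ) dξ = 1/cosh(√(t/2)) for t ≥ 0, then
σ(f) = (1/2)·e^{f/2}·∫₀^∞ e^{−ξ f²/2} p_PG(ξ) dξ for every real f. -/
theorem sigmoid_polya_gamma_representation (pPG : ℝ → ℝ)
    (hnonneg : ∀ ξ, 0 ≤ pPG ξ)
    (hLaplace : ∀ t : ℝ, 0 ≤ t →
      ∫ ξ in Set.Ioi (0 : ℝ), Real.exp (-ξ * t) * pPG ξ =
        1 / Real.cosh (Real.sqrt (t / 2))) :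
    ∀ f : ℝ,
      logistic f =
        (1 / 2) * Real.exp (f / 2) *
          ∫ ξ in Set.Ioi (0 : ℝ), Real.exp (-ξ * f ^ 2 / 2) * pPG ξ := by
  intro f
  have h1 : (∫ ξ in Set.Ioi (0 : ℝ), Real.exp (-ξ * f ^ 2 / 2) * pPG ξ)
      = ∫ ξ in Set.Ioi (0 : ℝ), Real.exp (-ξ * (f ^ 2 / 2)) * pPG ξ := by
    congr 1; ext ξ; ring_nf <;> norm_num <;> ring_nf
  have h2 := hLaplace (f ^ 2 / 2) (by positivity)
  have hsq : Real.sqrt (f ^ 2 / 2 / 2) = |f| / 2 := by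
    rw [show f ^ 2 / 2 / 2 = (f / 2) ^ 2 by ring, Real.sqrt_sq_eq_abs, abs_div]
    simp
  rw [h1, h2, hsq]
  have hc : Real.cosh (|f| / 2) = Real.cosh (f / 2) := by
    rcases abs_cases f with ⟨h, _⟩ | ⟨h, _⟩
    · rw [h]
    · rw [h]; rw [show -f / 2 = -(f / 2) by ring, Real.cosh_neg]
  rw [hc, Real.cosh_eq]
  have hpos : (0 : ℝ) < Real.exp (f / 2) + Real.exp (-(f / 2)) := by positivity
  have hpos2 : (0 : ℝ) < 1 + Real.exp (-f) := by positivity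
  unfold logistic
  have h3 : Real.exp (-f) * Real.exp (f/2) = Real.exp (-f/2) := by
    rw [← Real.exp_add]; ring_nf <;> norm_num <;> ring_nf
  have h4 : Real.exp (-f/2) * Real.exp (f/2) = 1 := by
    rw [← Real.exp_add]; ring_nf <;> norm_num <;> ring_nf
  field_simp
  nlinarith [Real.exp_pos (f/2), Real.exp_pos (-f/2), Real.exp_pos (-f), congrArg Real.exp (neg_div 2 f)]
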